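/- Every m×n matrix A over a field admits a decomposition A = C·U·P where C is in column echelon form, U is unit upper triangular, and P is a permutation matrix. -/

import Mathlib

open Matrix

/-- `C` is in column echelon form: the nonzero columns precede the zero
columns, and the row index of the first nonzero entry of each nonzero column
strictly increases with the column index. -/
def IsColEchelon {K : Type*} [Field K] {m n : ℕ}
    (C : Matrix (Fin m) (Fin n) K) : Prop :=
  ∃ (r : ℕ) (hr : r ≤ n) (piv : Fin r → Fin m), StrictMono piv ∧
    (∀ j : Fin n, r ≤ (j : ℕ) → ∀ i : Fin m, C i j = 0) ∧
    ∀ j : Fin r, C (piv j) (Fin.castLE hr j) ≠ 0 ∧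
      ∀ i : Fin m, (i : ℕ) < (piv j : ℕ) → C i (Fin.castLE hr j) = 0

section Aux

variable {K : Type*} [Field K]

lemma unitUpper_mul {n : ℕ} {U V : Matrix (Fin n) (Fin n) K}
    (hU1 : ∀ i, U i i = 1) (hU0 : ∀ i j : Fin n, (j : ℕ) < (i : ℕ) → U i j = 0)
    (hV1 : ∀ i, V i i = 1) (hV0 : ∀ i j : Fin n, (j : ℕ) < (i : ℕ) → V i j = 0) :
    (∀ i, (U * V) i i = 1) ∧ (∀ i j : Fin n, (j : ℕ) < (i : ℕ) → (U * V) i j = 0) := by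
  constructor
  · intro i
    rw [Matrix.mul_apply]
    rw [Finset.sum_eq_single i]
    · rw [hU1, hV1, one_mul]
    · intro k _ hk
      rcases lt_or_gt_of_ne (fun h => hk (Fin.ext h) : (k : ℕ) ≠ i) with h | h
      · rw [hU0 i k h, zero_mul]
      · rw [hV0 k i h, mul_zero]
    · intro h; exact absurd (Finset.mem_univ i) h
  · intro i j hij
    rw [Matrix.mul_apply]
    apply Finset.sum_eq_zero
    intro k _
    rcases lt_or_ge (k : ℕ) (i : ℕ) with h | h
    · rw [hU0 i k h, zero_mul]
    · rw [hV0 k j (lt_of_lt_of_le hij h), mul_zero]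

lemma cup_key (m : ℕ) : ∀ (n : ℕ) (A : Matrix (Fin m) (Fin n) K),
    ∃ (C : Matrix (Fin m) (Fin n) K) (U : Matrix (Fin n) (Fin n) K)
      (σ : Equiv.Perm (Fin n)),
        IsColEchelon C ∧ (∀ i, U i i = 1) ∧
        (∀ i j : Fin n, (j : ℕ) < (i : ℕ) → U i j = 0) ∧
        A = C * U * σ.permMatrix K := by
  induction m with
  | zero =>
    intro n A
    refine ⟨A, 1, 1, ⟨0, Nat.zero_le n, Fin.elim0, fun a => a.elim0,
      fun j _ i => i.elim0, fun j => j.elim0⟩, fun i => Matrix.one_apply_eq i,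
      fun i j h => Matrix.one_apply_ne (fun he => by omega), ?_⟩
    rw [Matrix.mul_one]
    rw [show (1 : Equiv.Perm (Fin n)).permMatrix K = 1 by
      show ((1 : Equiv.Perm (Fin n)).toPEquiv).toMatrix = 1
      rw [show (1 : Equiv.Perm (Fin n)) = Equiv.refl (Fin n) from rfl,
        Equiv.toPEquiv_refl, PEquiv.toMatrix_refl]]
    rw [Matrix.mul_one]
  | succ m ih =>
    intro n A
    by_cases h0 : ∀ j, A 0 j = 0
    · -- first row is zero: lift the decomposition of the remaining rows
      obtain ⟨C', U, σ, ⟨r, hr, piv', hmono, hz, hp⟩, hU1, hU0, hB⟩ :=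
        ih n (A.submatrix Fin.succ id)
      refine ⟨Matrix.of (Fin.cons 0 C'), U, σ, ⟨r, hr, Fin.succ ∘ piv', ?_, ?_, ?_⟩,
        hU1, hU0, ?_⟩
      · intro x y hxy
        simpa [Fin.succ_lt_succ_iff] using hmono hxy
      · intro j hj i
        refine Fin.cases ?_ (fun i' => ?_) i
        · simp [Matrix.of_apply]; rfl
        · exact hz j hj i'
      · intro j
        refine ⟨by exact (hp j).1, fun i => ?_⟩
        refine Fin.cases ?_ (fun i' => ?_) i <;> intro hi
        · simp [Matrix.of_apply]; rfl
        · have : (i' : ℕ) < (piv' j : ℕ) := by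
            simpa [Fin.val_succ, Function.comp] using hi
          exact (hp j).2 i' this
      · ext i j
        refine Fin.cases ?_ (fun i' => ?_) i
        · rw [h0 j, Matrix.mul_assoc, Matrix.mul_apply]
          apply (Finset.sum_eq_zero _).symm
          intro l _
          simp [Matrix.of_apply]
          exact Or.inl rfl
        · have : ∀ X : Matrix (Fin n) (Fin n) K,
              (Matrix.of (Fin.cons 0 C') * X) i'.succ = (C' * X) i' := by
            intro X; funext j'
            rw [Matrix.mul_apply, Matrix.mul_apply]
            congr 1
          calc A i'.succ j = (A.submatrix Fin.succ id) i' j := rfl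
            _ = (C' * U * σ.permMatrix K) i' j := by rw [hB]
            _ = (Matrix.of (Fin.cons 0 C') * U * σ.permMatrix K) i'.succ j := by
                rw [Matrix.mul_assoc, Matrix.mul_assoc, this]
    · -- there is a pivot in the first row
      push_neg at h0
      obtain ⟨j₀, ha⟩ := h0
      cases n with
      | zero => exact j₀.elim0
      | succ n' =>
        -- swap column j₀ to the front
        set τ : Equiv.Perm (Fin (n' + 1)) := Equiv.swap 0 j₀ with hτ
        set A₁ : Matrix (Fin (m + 1)) (Fin (n' + 1)) K := A.submatrix id τ with hA₁
        have ha1 : A₁ 0 0 ≠ 0 := by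
          simpa [hA₁, hτ, Equiv.swap_apply_left] using ha
        set a : K := A₁ 0 0 with haa
        -- eliminate the rest of the first row by column operations
        set A₂ : Matrix (Fin (m + 1)) (Fin (n' + 1)) K :=
          Matrix.of fun i j => if j = 0 then A₁ i 0
            else A₁ i j - A₁ i 0 * (A₁ 0 j / a) with hA₂
        set U₀ : Matrix (Fin (n' + 1)) (Fin (n' + 1)) K :=
          Matrix.of fun i j => if i = 0 then A₁ 0 j / a
            else if i = j then 1 else 0 with hU₀
        have hA1fact : A₁ = A₂ * U₀ := by
          ext i j
          rw [Matrix.mul_apply, Fin.sum_univ_succ]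
          refine Fin.cases ?_ (fun j' => ?_) j
          · have h1 : A₂ i 0 * U₀ 0 0 = A₁ i 0 := by
              simp [hA₂, hU₀, haa, div_self ha1, show A₁ 0 0 ≠ 0 from ha1]
            have h2 : ∀ k : Fin n', A₂ i k.succ * U₀ k.succ 0 = 0 := by
              intro k
              simp [hU₀, Fin.succ_ne_zero]
            rw [h1, Finset.sum_eq_zero (fun k _ => h2 k), add_zero]
          · have h1 : A₂ i 0 * U₀ 0 j'.succ = A₁ i 0 * (A₁ 0 j'.succ / a) := by
              simp [hA₂, hU₀]
            have h2 : ∀ k : Fin n',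
                A₂ i k.succ * U₀ k.succ j'.succ =
                  if k = j' then A₂ i k.succ else 0 := by
              intro k
              simp only [hU₀, Matrix.of_apply, Fin.succ_ne_zero, if_false,
                Fin.succ_inj]
              split <;> simp
            rw [h1, Finset.sum_congr rfl (fun k _ => h2 k),
              Finset.sum_ite_eq' Finset.univ j' (fun k => A₂ i k.succ),
              if_pos (Finset.mem_univ j')]
            simp only [hA₂, Matrix.of_apply, Fin.succ_ne_zero, if_false]
            ring
        have hAfact : A = A₁ * τ.permMatrix K := by
          rw [PEquiv.mul_toMatrix_toPEquiv, hA₁, Matrix.submatrix_submatrix]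
          ext i j
          simp [hτ, Equiv.symm_swap, Equiv.swap_apply_self]
        -- recurse on the lower-right block
        obtain ⟨C', U', σ', ⟨r', hr', piv', hmono, hz, hp⟩, hU'1, hU'0, hB⟩ :=
          ih n' (A₂.submatrix Fin.succ Fin.succ)
        -- extend σ' to Fin (n'+1), fixing 0
        set σe : Equiv.Perm (Fin (n' + 1)) :=
          ((finSuccEquiv n').symm.permCongr σ'.optionCongr) with hσe
        have hσ0 : σe 0 = 0 := by
          simp [hσe, Equiv.permCongr_apply, finSuccEquiv_zero]
        have hσs : ∀ j : Fin n', σe j.succ = (σ' j).succ := by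
          intro j
          simp [hσe, Equiv.permCongr_apply, finSuccEquiv_succ,
            finSuccEquiv_symm_some]
        have hσi0 : σe⁻¹ 0 = 0 := by
          rw [← hσ0]; exact σe.symm_apply_apply 0
        have hσis : ∀ j : Fin n', σe⁻¹ j.succ = (σ'⁻¹ j).succ := by
          intro j
          have : σe ((σ'⁻¹ j).succ) = j.succ := by
            rw [hσs, show σ' (σ'⁻¹ j) = j from σ'.apply_symm_apply j]
          rw [← this]; exact σe.symm_apply_apply _
        -- the echelon matrix
        set C : Matrix (Fin (m + 1)) (Fin (n' + 1)) K :=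
          Matrix.of (Fin.cons (Fin.cons a 0)
            (fun i' => Fin.cons (A₂ i'.succ 0) (C' i'))) with hC
        have hC00 : C 0 0 = a := by simp [hC]
        have hC0s : ∀ j : Fin n', C 0 j.succ = 0 := by intro j; simp [hC]
        have hCs0 : ∀ i : Fin m, C i.succ 0 = A₂ i.succ 0 := by
          intro i; simp [hC]
        have hCss : ∀ (i : Fin m) (j : Fin n'), C i.succ j.succ = C' i j := by
          intro i j; simp [hC]
        -- the extended upper triangular factor
        set Ue : Matrix (Fin (n' + 1)) (Fin (n' + 1)) K :=
          Matrix.of (Fin.cons (Fin.cons 1 0)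
            (fun i' => Fin.cons 0 (U' i'))) with hUe
        have hUe00 : Ue 0 0 = 1 := by simp [hUe]
        have hUe0s : ∀ j : Fin n', Ue 0 j.succ = 0 := by intro j; simp [hUe]
        have hUes0 : ∀ i : Fin n', Ue i.succ 0 = 0 := by intro i; simp [hUe]
        have hUess : ∀ i j : Fin n', Ue i.succ j.succ = U' i j := by
          intro i j; simp [hUe]
        -- A₂ = C * Ue * σe.permMatrix
        have hA2fact : A₂ = C * Ue * σe.permMatrix K := by
          rw [PEquiv.mul_toMatrix_toPEquiv]
          ext i j
          rw [Matrix.submatrix_apply]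
          simp only [id_eq]
          refine Fin.cases ?_ (fun i' => ?_) i
          · -- row 0
            have hrow : ∀ l : Fin (n' + 1), (C * Ue) 0 l = if l = 0 then a else 0 := by
              intro l
              rw [Matrix.mul_apply, Fin.sum_univ_succ, hC00]
              rw [Finset.sum_eq_zero (fun k _ => by rw [hC0s, zero_mul]), add_zero]
              refine Fin.cases ?_ (fun l' => ?_) l
              · rw [hUe00, mul_one, if_pos rfl]
              · rw [hUe0s, mul_zero, if_neg (Fin.succ_ne_zero l')]
            rw [hrow]
            refine Fin.cases ?_ (fun j' => ?_) j
            · rw [show σe.symm 0 = 0 from hσi0, if_pos rfl]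
              simp [hA₂, haa]
            · rw [show σe.symm j'.succ = (σ'⁻¹ j').succ from hσis j',
                if_neg (Fin.succ_ne_zero _)]
              simp only [hA₂, Matrix.of_apply, Fin.succ_ne_zero, if_false, haa]
              field_simp
              rw [div_self (show A₁ 0 0 ≠ 0 from ha1), sub_self, mul_zero]
          · -- rows i'.succ
            have hrow : ∀ l : Fin (n' + 1), (C * Ue) i'.succ l =
                Fin.cases (A₂ i'.succ 0) (fun l' => (C' * U') i' l') l := by
              intro l
              rw [Matrix.mul_apply, Fin.sum_univ_succ, hCs0]
              refine Fin.cases ?_ (fun l' => ?_) l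
              · rw [hUe00, mul_one,
                  Finset.sum_eq_zero (fun k _ => by rw [hUes0, mul_zero]), add_zero]
                rfl
              · rw [hUe0s, mul_zero, zero_add]
                rw [show (∑ k : Fin n', C i'.succ k.succ * Ue k.succ l'.succ)
                    = ∑ k : Fin n', C' i' k * U' k l' from
                  Finset.sum_congr rfl (fun k _ => by rw [hCss, hUess])]
                rw [show (Fin.cases (A₂ i'.succ 0)
                    (fun l'' => (C' * U') i' l'') l'.succ : K)
                  = (C' * U') i' l' from rfl, Matrix.mul_apply]
            rw [hrow]
            refine Fin.cases ?_ (fun j' => ?_) j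
            · rw [show σe.symm 0 = 0 from hσi0]
              simp [hA₂]
            · rw [show σe.symm j'.succ = (σ'⁻¹ j').succ from hσis j']
              have : (C' * U' * σ'.permMatrix K) i' j' = (C' * U') i' (σ'⁻¹ j') := by
                rw [PEquiv.mul_toMatrix_toPEquiv, Matrix.submatrix_apply]; rfl
              have hB' : A₂ i'.succ j'.succ = (C' * U') i' (σ'⁻¹ j') := by
                rw [← this, ← hB]; rfl
              rw [show (Fin.cases (A₂ i'.succ 0)
                  (fun l'' => (C' * U') i' l'') (σ'⁻¹ j').succ : K)
                = (C' * U') i' (σ'⁻¹ j') from rfl]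
              exact hB'
        -- commute σe past U₀
        have hcomm : σe.permMatrix K * U₀ = (U₀.submatrix σe σe) * σe.permMatrix K := by
          rw [PEquiv.toMatrix_toPEquiv_mul, PEquiv.mul_toMatrix_toPEquiv,
            Matrix.submatrix_submatrix]
          ext i j
          simp [Equiv.apply_symm_apply]
        -- U₀.submatrix σe σe is unit upper triangular
        have hU₀s1 : ∀ i, (U₀.submatrix σe σe) i i = 1 := by
          intro i
          refine Fin.cases ?_ (fun i' => ?_) i
          · simp [hU₀, hσ0, haa, div_self ha1, show A₁ 0 0 ≠ 0 from ha1]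
          · rw [Matrix.submatrix_apply, hσs]
            simp [hU₀, Fin.succ_ne_zero]
        have hU₀s0 : ∀ i j : Fin (n' + 1), (j : ℕ) < (i : ℕ) →
            (U₀.submatrix σe σe) i j = 0 := by
          intro i j hij
          have hi0 : i ≠ 0 := by
            intro h; rw [h] at hij; exact absurd hij (by simp)
          obtain ⟨i', rfl⟩ : ∃ i', i = i'.succ :=
            ⟨i.pred hi0, by simp⟩
          rw [Matrix.submatrix_apply, hσs]
          have hne : σe j ≠ (σ' i').succ := by
            rw [← hσs]
            intro h
            have := σe.injective h
            rw [this] at hij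
            omega
          simp only [hU₀, Matrix.of_apply, Fin.succ_ne_zero, if_false]
          rw [if_neg (fun h => hne h.symm)]
        -- Ue is unit upper triangular
        have hUe1 : ∀ i, Ue i i = 1 := by
          intro i
          refine Fin.cases ?_ (fun i' => ?_) i
          · exact hUe00
          · rw [hUess]; exact hU'1 i'
        have hUe0 : ∀ i j : Fin (n' + 1), (j : ℕ) < (i : ℕ) → Ue i j = 0 := by
          intro i j hij
          have hi0 : i ≠ 0 := by
            intro h; rw [h] at hij; exact absurd hij (by simp)
          obtain ⟨i', rfl⟩ : ∃ i', i = i'.succ := ⟨i.pred hi0, by simp⟩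
          revert hij
          refine Fin.cases ?_ (fun j' => ?_) j <;> intro hij
          · exact hUes0 i'
          · rw [hUess]
            exact hU'0 i' j' (by simpa [Fin.val_succ] using hij)
        obtain ⟨hUU1, hUU0⟩ := unitUpper_mul hUe1 hUe0 hU₀s1 hU₀s0
        -- the echelon structure of C
        have hech : IsColEchelon C := by
          refine ⟨r' + 1, Nat.succ_le_succ hr',
            Fin.cons 0 (Fin.succ ∘ piv'), ?_, ?_, ?_⟩
          · intro x y
            refine Fin.cases ?_ (fun x' => ?_) x <;>
              refine Fin.cases ?_ (fun y' => ?_) y <;> intro hxy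
            · exact absurd hxy (lt_irrefl _)
            · simp only [Fin.cons_zero, Fin.cons_succ, Function.comp]
              exact Fin.succ_pos _
            · exact absurd hxy (by simp [Fin.lt_def])
            · simp only [Fin.cons_succ, Function.comp]
              rw [Fin.succ_lt_succ_iff]
              exact hmono (by simpa [Fin.succ_lt_succ_iff] using hxy)
          · intro j hj i
            have hj0 : j ≠ 0 := by
              intro h; rw [h] at hj; simp at hj
            obtain ⟨j', rfl⟩ : ∃ j', j = j'.succ := ⟨j.pred hj0, by simp⟩
            have hj' : r' ≤ (j' : ℕ) := by
              simpa [Fin.val_succ] using hj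
            refine Fin.cases ?_ (fun i' => ?_) i
            · exact hC0s j'
            · rw [hCss]; exact hz j' hj' i'
          · intro j
            refine Fin.cases ?_ (fun j' => ?_) j
            · constructor
              · rw [show Fin.castLE (Nat.succ_le_succ hr') (0 : Fin (r' + 1)) = 0
                  from rfl]
                simp only [Fin.cons_zero]
                rw [hC00]; exact ha1
              · intro i hi
                simp only [Fin.cons_zero, Fin.val_zero] at hi
                exact absurd hi (by omega)
            · have hcast : Fin.castLE (Nat.succ_le_succ hr') j'.succ =
                  (Fin.castLE hr' j').succ := by
                ext; simp
              constructor
              · rw [hcast]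
                simp only [Fin.cons_succ, Function.comp]
                rw [hCss]
                exact (hp j').1
              · intro i
                rw [hcast]
                refine Fin.cases ?_ (fun i' => ?_) i <;> intro hi
                · exact hC0s _
                · rw [hCss]
                  refine (hp j').2 i' ?_
                  simp only [Fin.cons_succ, Function.comp, Fin.val_succ] at hi
                  omega
          -- final assembly
        refine ⟨C, Ue * U₀.submatrix σe σe, τ * σe, hech, hUU1, hUU0, ?_⟩
        have hperm : σe.permMatrix K * τ.permMatrix K = (τ * σe).permMatrix K := by
          show (σe.toPEquiv).toMatrix * (τ.toPEquiv).toMatrix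
            = ((τ * σe).toPEquiv).toMatrix
          rw [← PEquiv.toMatrix_trans, ← Equiv.toPEquiv_trans]
          rfl
        calc A = A₁ * τ.permMatrix K := hAfact
          _ = A₂ * U₀ * τ.permMatrix K := by rw [← hA1fact]
          _ = C * Ue * σe.permMatrix K * U₀ * τ.permMatrix K := by rw [← hA2fact]
          _ = C * Ue * (σe.permMatrix K * U₀) * τ.permMatrix K := by
              rw [Matrix.mul_assoc (C * Ue)]
          _ = C * Ue * (U₀.submatrix σe σe * σe.permMatrix K) * τ.permMatrix K := by
              rw [hcomm]
          _ = C * (Ue * U₀.submatrix σe σe) * ((τ * σe).permMatrix K) := by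
              rw [← hperm]; noncomm_ring [Matrix.mul_assoc]

end Aux

theorem cup_stmt14 {K : Type*} [Field K] {m n : ℕ}
    (A : Matrix (Fin m) (Fin n) K) :
    ∃ (C : Matrix (Fin m) (Fin n) K) (U P : Matrix (Fin n) (Fin n) K)
      (σ : Equiv.Perm (Fin n)),
        IsColEchelon C ∧
        (∀ i : Fin n, U i i = 1) ∧
        (∀ i j : Fin n, (j : ℕ) < (i : ℕ) → U i j = 0) ∧
        P = σ.permMatrix K ∧
        A = C * U * P := by
  obtain ⟨C, U, σ, h1, h2, h3, h4⟩ := cup_key m n A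
  exact ⟨C, U, σ.permMatrix K, σ, h1, h2, h3, rfl, h4⟩
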